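/- Let H ∈ [0, 1/2), set R := artanh(2H), let C ≤ −1, and define g_C : ℝ → ℝ by g_C(s) = (2H·sinh s + C·√(1−4H²))/cosh s and M_C := arcosh(−C) − R. Then g_C(M_C) = −1, and for every s ∈ ℝ one has |g_C(s)| < 1 if and only if s < −R − arcosh(−C) or s > M_C. In particular (M_C, +∞) is the maximal interval containing +∞ on which |g_C| < 1. -/

import Mathlib

open Real

/-- The inverse hyperbolic tangent. -/
noncomputable def artanh (x : ℝ) : ℝ := Real.log ((1 + x) / (1 - x)) / 2

/-- The inverse hyperbolic cosine (on `[1, ∞)`). -/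
noncomputable def arcosh (x : ℝ) : ℝ := Real.log (x + Real.sqrt (x ^ 2 - 1))

lemma exp_half_log' {q : ℝ} (hq : 0 < q) : Real.exp (Real.log q / 2) = Real.sqrt q := by
  rw [← Real.log_sqrt hq.le, Real.exp_log (Real.sqrt_pos.mpr hq)]

lemma sinh_cosh_artanh' {t : ℝ} (h0 : 0 ≤ t) (h1 : t < 1) :
    Real.sinh (_root_.artanh t) = t / Real.sqrt (1 - t ^ 2) ∧
    Real.cosh (_root_.artanh t) = 1 / Real.sqrt (1 - t ^ 2) := by
  set a := Real.sqrt (1 + t) with ha0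
  set b := Real.sqrt (1 - t) with hb0
  have ha : a ^ 2 = 1 + t := Real.sq_sqrt (by linarith)
  have hb : b ^ 2 = 1 - t := Real.sq_sqrt (by linarith)
  have hap : 0 < a := Real.sqrt_pos.mpr (by linarith)
  have hbp : 0 < b := Real.sqrt_pos.mpr (by linarith)
  have hq : (0:ℝ) < (1 + t) / (1 - t) := div_pos (by linarith) (by linarith)
  have hsq : Real.sqrt ((1 + t) / (1 - t)) = a / b := by
    rw [show (1 + t) / (1 - t) = (a / b) ^ 2 by rw [div_pow, ha, hb]]
    exact Real.sqrt_sq (by positivity)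
  have hE : Real.exp (_root_.artanh t) = a / b := by
    rw [_root_.artanh, exp_half_log' hq, hsq]
  have hne : Real.sqrt (1 - t ^ 2) = a * b := by
    rw [show 1 - t ^ 2 = (1 + t) * (1 - t) by ring, Real.sqrt_mul (by linarith)]
  constructor
  · rw [Real.sinh_eq, hE, Real.exp_neg, hE, hne]
    field_simp
    linear_combination ha - hb
  · rw [Real.cosh_eq, hE, Real.exp_neg, hE, hne]
    field_simp
    linear_combination ha + hb

lemma cosh_arcosh' {y : ℝ} (hy : 1 ≤ y) : Real.cosh (_root_.arcosh y) = y := by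
  have hs : Real.sqrt (y ^ 2 - 1) ^ 2 = y ^ 2 - 1 := Real.sq_sqrt (by nlinarith)
  have hsn : 0 ≤ Real.sqrt (y ^ 2 - 1) := Real.sqrt_nonneg _
  have hw : 0 < y + Real.sqrt (y ^ 2 - 1) := by linarith
  rw [_root_.arcosh, Real.cosh_eq, Real.exp_log hw, Real.exp_neg, Real.exp_log hw]
  field_simp
  nlinarith [hs]

lemma arcosh_nonneg' {y : ℝ} (hy : 1 ≤ y) : 0 ≤ _root_.arcosh y :=
  Real.log_nonneg (by nlinarith [Real.sqrt_nonneg (y ^ 2 - 1)])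

/-- For `H ∈ [0, 1/2)`, `R = artanh(2H)`, `C ≤ −1`,
`g_C(s) = (2H·sinh s + C·√(1−4H²))/cosh s` and `M_C = arcosh(−C) − R`,
one has `g_C(M_C) = −1`, and `|g_C(s)| < 1` iff `s < −R − arcosh(−C)` or `s > M_C`;
in particular `(M_C, ∞)` is the maximal interval containing `+∞` on which `|g_C| < 1`. -/
theorem gC_eq_neg_one_at_MC_and_abs_lt_one_iff
    (H : ℝ) (hH0 : 0 ≤ H) (hH : H < 1 / 2) (R : ℝ) (hR : R = _root_.artanh (2 * H))
    (C : ℝ) (hC : C ≤ -1) (g : ℝ → ℝ)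
    (hg : ∀ s : ℝ, g s = (2 * H * Real.sinh s + C * Real.sqrt (1 - 4 * H ^ 2)) / Real.cosh s)
    (M : ℝ) (hM : M = _root_.arcosh (-C) - R) :
    g M = -1 ∧
    (∀ s : ℝ, |g s| < 1 ↔ (s < -R - _root_.arcosh (-C) ∨ M < s)) ∧
    ∀ I : Set ℝ, IsConnected I → (∀ s ∈ I, |g s| < 1) →
      (∀ b : ℝ, ∃ s ∈ I, b < s) → I ⊆ Set.Ioi M := by
  have ht0 : 0 ≤ 2 * H := by linarith
  have ht1 : 2 * H < 1 := by linarith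
  obtain ⟨hsR, hcR⟩ := sinh_cosh_artanh' ht0 ht1
  rw [← hR] at hsR hcR
  have hdpos : 0 < Real.sqrt (1 - (2 * H) ^ 2) := Real.sqrt_pos.mpr (by nlinarith)
  have hd4 : Real.sqrt (1 - 4 * H ^ 2) = Real.sqrt (1 - (2 * H) ^ 2) := by
    congr 1; ring
  have key : ∀ s, g s = (Real.sinh R * Real.sinh s + C) / (Real.cosh R * Real.cosh s) := by
    intro s
    rw [hg s, hd4, hsR, hcR]
    have hcs := Real.cosh_pos s
    field_simp
    have hx : Real.sqrt (1 - 2 ^ 2 * H ^ 2) ≠ 0 := by rw [← mul_pow]; exact hdpos.ne'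
    rw [mul_add, mul_div_assoc', mul_div_cancel_left₀ _ hx]
    ring
  have hC1 : (1:ℝ) ≤ -C := by linarith
  have hA : Real.cosh (_root_.arcosh (-C)) = -C := cosh_arcosh' hC1
  have hAnn : 0 ≤ _root_.arcosh (-C) := arcosh_nonneg' hC1
  set A := _root_.arcosh (-C) with hA0
  have hgM : g M = -1 := by
    have h1 : Real.cosh (M + R) = -C := by rw [show M + R = A by rw [hM]; ring]; exact hA
    rw [Real.cosh_add] at h1
    have hnum : Real.sinh R * Real.sinh M + C = -(Real.cosh R * Real.cosh M) := by
      linear_combination h1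
    rw [key M, hnum, neg_div, div_self (by positivity)]
  have hiff : ∀ s, |g s| < 1 ↔ (s < -R - A ∨ M < s) := by
    intro s
    have hpos : 0 < Real.cosh R * Real.cosh s := by positivity
    have hch : Real.cosh (s + R) = Real.cosh R * Real.cosh s + Real.sinh R * Real.sinh s := by
      rw [Real.cosh_add]; ring
    have hcsub : Real.cosh (s - R) = Real.cosh R * Real.cosh s - Real.sinh R * Real.sinh s := by
      rw [Real.cosh_sub]; ring
    have hupper : Real.sinh R * Real.sinh s + C < Real.cosh R * Real.cosh s := by
      have := Real.one_le_cosh (s - R)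
      linarith
    rw [key s, abs_div, abs_of_pos hpos, div_lt_one hpos, abs_lt]
    constructor
    · rintro ⟨h1, _⟩
      have hc : Real.cosh A < Real.cosh (s + R) := by rw [hA]; linarith
      have habs : |A| < |s + R| := Real.cosh_lt_cosh.mp hc
      rw [abs_of_nonneg hAnn] at habs
      rcases lt_abs.mp habs with h | h
      · right; rw [hM]; linarith
      · left; linarith
    · intro h
      have habs : A < |s + R| := by
        rcases h with h | h
        · rw [abs_of_nonpos (by linarith)]; linarith
        · rw [hM] at h
          rw [abs_of_nonneg (by linarith)]; linarith
      have hc : Real.cosh A < Real.cosh (s + R) := by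
        apply Real.cosh_lt_cosh.mpr
        rw [abs_of_nonneg hAnn]
        exact habs
      rw [hA] at hc
      exact ⟨by linarith, hupper⟩
  refine ⟨hgM, fun s => (hiff s).trans (by rw [hM]), ?_⟩
  intro I hconn hlt hub s hs
  simp only [Set.mem_Ioi]
  by_contra hsM
  push_neg at hsM
  obtain ⟨s', hs', hss'⟩ := hub M
  have hMI : M ∈ I := hconn.isPreconnected.ordConnected.out hs hs' ⟨hsM, hss'.le⟩
  have h := hlt M hMI
  rw [hgM] at h
  norm_num at h
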